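/- Fix 0<α<1 and define the sequence h_0=0, h_{i+1}=h_i+α^i, so that h_i increases to H=(1-α)^{-1}. If (X_n) is a non-negative integer-valued process adapted to a filtration F_n with |X_{n+1}-X_n| ≤ R a.s. and E[X_{n+1}-X_n | F_n] ≥ ρ > 0 on {X_n>0}, then for α sufficiently close to 1 (depending only on ρ and R), the process Y_n = h_{X_n} is a submartingale. -/

import Mathlib

open MeasureTheory Filter

lemma cov_sm_pow {Ω : Type*} {m : MeasurableSpace Ω} {α : ℝ} (hα : 0 < α) {X : Ω → ℕ}
    (hX : StronglyMeasurable[m] (fun ω => (X ω : ℝ))) :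
    StronglyMeasurable[m] (fun ω => α ^ X ω) := by
  have heq : (fun ω => α ^ X ω)
      = (fun t : ℝ => Real.exp (t * Real.log α)) ∘ (fun ω => (X ω : ℝ)) := by
    funext ω
    simp only [Function.comp]
    rw [Real.exp_nat_mul, Real.exp_log hα]
  rw [heq]
  exact (Real.continuous_exp.comp (continuous_id.mul continuous_const)).comp_stronglyMeasurable hX

lemma cov_sm_zpow {Ω : Type*} {m : MeasurableSpace Ω} {α : ℝ} (hα : 0 < α) {D : Ω → ℤ}
    (hD : StronglyMeasurable[m] (fun ω => (D ω : ℝ))) :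
    StronglyMeasurable[m] (fun ω => α ^ D ω) := by
  have heq : (fun ω => α ^ D ω)
      = (fun t : ℝ => Real.exp (t * Real.log α)) ∘ (fun ω => (D ω : ℝ)) := by
    funext ω
    simp only [Function.comp]
    rw [← Real.rpow_intCast α (D ω), Real.rpow_def_of_pos hα, mul_comm]
  rw [heq]
  exact (Real.continuous_exp.comp (continuous_id.mul continuous_const)).comp_stronglyMeasurable hD

lemma cov_int_of_bound {Ω : Type*} {m0 : MeasurableSpace Ω} {μ : Measure Ω}
    [IsFiniteMeasure μ] {f : Ω → ℝ} (C : ℝ) (hf : AEStronglyMeasurable f μ)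
    (h : ∀ᵐ ω ∂μ, |f ω| ≤ C) : Integrable f μ :=
  (integrable_const C).mono' hf (by simpa [Real.norm_eq_abs] using h)

lemma cov_aux_zpow (α R : ℝ) (hα0 : 0 < α) (hα1 : α < 1) (hRε : R * (1 - α) ≤ 1/2)
    (d : ℤ) (hd : |(d : ℝ)| ≤ R) :
    ((d : ℝ) - 2 * R ^ 2 * (1 - α) ≤ (1 - α ^ d) / (1 - α)) ∧ α ^ d ≤ 2 := by
  have hε : 0 < 1 - α := by linarith
  rcases d with k | k
  · -- d = k ≥ 0
    have hzk : α ^ (Int.ofNat k) = α ^ k := by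
      rw [Int.ofNat_eq_coe, zpow_natCast]
    have hck : ((Int.ofNat k : ℤ) : ℝ) = (k : ℝ) := by rfl
    have hk : (k : ℝ) ≤ R := by
      rw [hck] at hd; exact (abs_le.1 hd).2
    have hbern : 1 - (k : ℝ) * (1 - α) ≤ α ^ k := by
      have := one_add_mul_le_pow (a := -(1 - α)) (by linarith) k
      have h' : (1 : ℝ) + (k : ℝ) * (-(1 - α)) = 1 - k * (1 - α) := by ring
      have h'' : (1 : ℝ) + (-(1 - α)) = α := by ring
      rw [h', h''] at this; exact this
    constructor
    · have hsum : ∑ i ∈ Finset.range k, α ^ i = (1 - α ^ k) / (1 - α) := by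
        rw [geom_sum_eq hα1.ne]
        rw [show (α ^ k - 1) = -(1 - α ^ k) by ring, show (α - 1) = -(1 - α) by ring,
          neg_div_neg_eq]
      have hterm : ∀ i ∈ Finset.range k, 1 - (k : ℝ) * (1 - α) ≤ α ^ i := by
        intro i hi
        exact le_trans hbern (pow_le_pow_of_le_one hα0.le hα1.le
          (Finset.mem_range.1 hi).le)
      have hlow : (k : ℝ) * (1 - (k : ℝ) * (1 - α)) ≤ ∑ i ∈ Finset.range k, α ^ i := by
        calc (k : ℝ) * (1 - (k : ℝ) * (1 - α))
            = ∑ _i ∈ Finset.range k, (1 - (k : ℝ) * (1 - α)) := by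
              simp [mul_comm]
              ring
          _ ≤ _ := Finset.sum_le_sum hterm
      rw [hzk, hck, ← hsum]
      have hk0 : (0 : ℝ) ≤ k := Nat.cast_nonneg k
      nlinarith [mul_le_mul_of_nonneg_right (mul_self_le_mul_self hk0 hk) hε.le,
        sq_nonneg R, mul_nonneg (mul_nonneg (sq_nonneg R) hε.le) hε.le]
    · rw [hzk]
      have := pow_le_one₀ hα0.le hα1.le (n := k)
      linarith
  · -- d = -(k+1)
    have hcast : ((Int.negSucc k : ℤ) : ℝ) = -((k + 1 : ℕ) : ℝ) := by
      simp [Int.negSucc_eq]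
    set m : ℕ := k + 1 with hm
    have hmR : (m : ℝ) ≤ R := by
      rw [hcast] at hd
      have h1 := (abs_le.1 hd).1
      linarith
    have hm0 : (0 : ℝ) ≤ (m : ℝ) := Nat.cast_nonneg m
    have hbern : 1 - (m : ℝ) * (1 - α) ≤ α ^ m := by
      have := one_add_mul_le_pow (a := -(1 - α)) (by linarith) m
      have h' : (1 : ℝ) + (m : ℝ) * (-(1 - α)) = 1 - m * (1 - α) := by ring
      have h'' : (1 : ℝ) + (-(1 - α)) = α := by ring
      rw [h', h''] at this; exact this
    have hp0 : 0 < α ^ m := pow_pos hα0 m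
    have hp1 : α ^ m ≤ 1 := pow_le_one₀ hα0.le hα1.le
    have hmε : (m : ℝ) * (1 - α) ≤ R * (1 - α) :=
      mul_le_mul_of_nonneg_right hmR hε.le
    have hq : 1 - α ^ m ≤ (m : ℝ) * (1 - α) := by linarith
    have hqR : 1 - α ^ m ≤ R * (1 - α) := le_trans hq hmε
    have hq0 : (0 : ℝ) ≤ 1 - α ^ m := by linarith
    have hphalf : (1 : ℝ) / 2 ≤ α ^ m := by linarith
    have hzpow : α ^ (Int.negSucc k) = (α ^ m)⁻¹ := by
      rw [zpow_negSucc]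
    constructor
    · rw [hzpow, hcast, le_div_iff₀ hε]
      have hinv : (1 : ℝ) - (α ^ m)⁻¹ = (α ^ m - 1) / α ^ m := by field_simp
      rw [hinv, le_div_iff₀ hp0]
      nlinarith [mul_le_mul_of_nonneg_right hq hp0.le,
        mul_self_le_mul_self hq0 hqR,
        mul_nonneg (mul_nonneg (sq_nonneg R) hε.le) hε.le]
    · rw [hzpow, inv_le_comm₀ hp0 (by norm_num)]
      linarith

/-- Change of variables: with `h_i = (1-α^i)/(1-α)` (i.e. `h_0 = 0`,
`h_{i+1} = h_i + α^i`), for `α < 1` close enough to `1` (depending only on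
`ρ` and `R`), the process `Y_n = h_{X_n}` is a submartingale whenever `X` is a
non-negative integer-valued adapted process with increments bounded by `R` and
conditional drift at least `ρ > 0` on `{X_n > 0}`. -/
theorem change_of_variables_submartingale {Ω : Type*} {m0 : MeasurableSpace Ω}
    {μ : Measure Ω} [IsProbabilityMeasure μ] (ℱ : Filtration ℕ m0)
    (ρ R : ℝ) (hρ : 0 < ρ) (hR : 0 < R) :
    ∃ α0 : ℝ, 0 ≤ α0 ∧ α0 < 1 ∧ ∀ α : ℝ, α0 < α → α < 1 →
      ∀ X : ℕ → Ω → ℕ,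
        Adapted ℱ (fun n ω => (X n ω : ℝ)) →
        (∀ n, ∀ᵐ ω ∂μ, |(X (n+1) ω : ℝ) - (X n ω : ℝ)| ≤ R) →
        (∀ n, ∀ᵐ ω ∂μ, 0 < X n ω →
          ρ ≤ (μ[(fun ω' => (X (n+1) ω' : ℝ) - (X n ω' : ℝ)) | ℱ n]) ω) →
        Submartingale (fun n ω => (1 - α ^ X n ω) / (1 - α)) ℱ μ := by
  refine ⟨max (1 - 1/(2*R)) (max (1 - ρ/(2*R^2)) 0), le_max_of_le_right (le_max_right _ _),
    ?_, ?_⟩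
  · apply max_lt
    · have : 0 < 1/(2*R) := by positivity
      linarith
    · apply max_lt
      · have : 0 < ρ/(2*R^2) := by positivity
        linarith
      · norm_num
  intro α hα0' hα1 X hadp hbdd hdrift
  have hα0 : 0 < α := lt_of_le_of_lt (le_max_of_le_right (le_max_right _ _)) hα0'
  have hε : 0 < 1 - α := by linarith
  have hRε : R * (1 - α) ≤ 1/2 := by
    have h1 : 1 - 1/(2*R) < α := lt_of_le_of_lt (le_max_left _ _) hα0'
    have h2 : (0:ℝ) < 2*R := by linarith
    have h3 : (1 - α) * (2*R) < 1 := by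
      rw [← lt_div_iff₀ h2]; linarith
    nlinarith
  have hρε : 2 * R ^ 2 * (1 - α) ≤ ρ := by
    have h1 : 1 - ρ/(2*R^2) < α := lt_of_le_of_lt (le_max_of_le_right (le_max_left _ _)) hα0'
    have h2 : (0:ℝ) < 2*R^2 := by positivity
    have h3 : (1 - α) * (2*R^2) < ρ := by
      rw [← lt_div_iff₀ h2]; linarith
    nlinarith
  set Y : ℕ → Ω → ℝ := fun n ω => (1 - α ^ X n ω) / (1 - α) with hY
  -- adaptedness
  have hadY : Adapted ℱ Y := by
    intro n
    have : Y n = fun ω => (1 - α ^ X n ω) * (1 - α)⁻¹ := by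
      funext ω; rw [hY]; ring
    rw [this]
    exact ((stronglyMeasurable_const.sub (cov_sm_pow hα0 (hadp n).stronglyMeasurable)).mul stronglyMeasurable_const).measurable
  -- bounds and integrability for Y
  have hYbd : ∀ n ω, |Y n ω| ≤ 1 / (1 - α) := by
    intro n ω
    rw [hY, abs_div, abs_of_pos hε]
    gcongr
    rw [abs_le]
    constructor <;>
      nlinarith [pow_pos hα0 (X n ω), pow_le_one₀ hα0.le hα1.le (n := X n ω)]
  have hYint : ∀ n, Integrable (Y n) μ := by
    intro n
    exact cov_int_of_bound (1/(1-α))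
      (((hadY n).stronglyMeasurable.mono (ℱ.le n)).aestronglyMeasurable)
      (Filter.Eventually.of_forall (hYbd n))
  refine submartingale_nat hadY.stronglyAdapted hYint ?_
  intro n
  have hdriftn := hdrift n
  set D : Ω → ℝ := fun ω' => ((X (n+1) ω' : ℝ)) - ((X n ω' : ℝ)) with hD
  set c : ℝ := 2 * R ^ 2 * (1 - α) with hc
  set W : Ω → ℝ := fun ω => (1 - α ^ ((X (n+1) ω : ℤ) - (X n ω : ℤ))) / (1 - α) with hW
  set φ : Ω → ℝ := fun ω => α ^ X n ω with hφ
  set A : Set Ω := {ω | X n ω = 0} with hA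
  have hcastD : ∀ ω, (((X (n+1) ω : ℤ) - (X n ω : ℤ) : ℤ) : ℝ) = D ω := by
    intro ω; rw [hD]; push_cast; ring
  have hDm : StronglyMeasurable D :=
    ((hadp (n+1)).stronglyMeasurable.mono (ℱ.le (n+1))).sub ((hadp n).stronglyMeasurable.mono (ℱ.le n))
  have hDint : Integrable D μ := cov_int_of_bound R hDm.aestronglyMeasurable (hbdd n)
  have haux : ∀ᵐ ω ∂μ, (D ω - c ≤ W ω) ∧ |W ω| ≤ 1 / (1 - α) := by
    filter_upwards [hbdd n] with ω hω
    obtain ⟨h1, h2⟩ := cov_aux_zpow α R hα0 hα1 hRε ((X (n+1) ω : ℤ) - (X n ω : ℤ))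
      (by rw [hcastD]; exact hω)
    constructor
    · show D ω - c ≤ (1 - α ^ ((X (n+1) ω : ℤ) - (X n ω : ℤ))) / (1 - α)
      rw [← hcastD ω] 
      rw [hc]
      exact h1
    · show |(1 - α ^ ((X (n+1) ω : ℤ) - (X n ω : ℤ))) / (1 - α)| ≤ 1 / (1 - α)
      rw [abs_div, abs_of_pos hε]
      gcongr
      have h3 : (0:ℝ) < α ^ ((X (n+1) ω : ℤ) - (X n ω : ℤ)) := zpow_pos hα0 _
      rw [abs_le]; constructor <;> linarith
  have hZm : StronglyMeasurable (fun ω => α ^ ((X (n+1) ω : ℤ) - (X n ω : ℤ))) := by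
    apply cov_sm_zpow hα0
    have heq2 : (fun ω => (((X (n+1) ω : ℤ) - (X n ω : ℤ) : ℤ) : ℝ)) = D := funext hcastD
    rw [heq2]; exact hDm
  have hWm : StronglyMeasurable W := by
    have heq3 : W = fun ω => (1 - α ^ ((X (n+1) ω : ℤ) - (X n ω : ℤ))) * (1-α)⁻¹ := by
      funext ω; rw [hW]; ring
    rw [heq3]
    exact (stronglyMeasurable_const.sub hZm).mul stronglyMeasurable_const
  have hWint : Integrable W μ :=
    cov_int_of_bound (1/(1-α)) hWm.aestronglyMeasurable (haux.mono fun ω h => h.2)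
  have hφm : StronglyMeasurable[ℱ n] φ := cov_sm_pow hα0 (hadp n).stronglyMeasurable
  have hAm : MeasurableSet[ℱ n] A := by
    have heq4 : A = (fun ω => (X n ω : ℝ)) ⁻¹' {0} := by
      ext ω; simp [hA, Nat.cast_eq_zero]
    rw [heq4]
    exact (hadp n) (measurableSet_singleton 0)
  have hkey : ∀ ω, Y (n+1) ω - Y n ω = φ ω * W ω := by
    intro ω
    show Y (n+1) ω - Y n ω
      = α ^ X n ω * ((1 - α ^ ((X (n+1) ω : ℤ) - (X n ω : ℤ))) / (1 - α))
    rw [hY]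
    have hzsub : α ^ ((X (n+1) ω : ℤ) - (X n ω : ℤ)) = α ^ X (n+1) ω / α ^ X n ω := by
      rw [zpow_sub₀ (ne_of_gt hα0), zpow_natCast, zpow_natCast]
    rw [hzsub]
    have h1 : α ^ X n ω ≠ 0 := (pow_pos hα0 _).ne'
    field_simp
    ring
  have hΔint : Integrable (fun ω => Y (n+1) ω - Y n ω) μ := (hYint (n+1)).sub (hYint n)
  have hdecomp : (fun ω => Y (n+1) ω - Y n ω)
      = A.indicator (fun ω => Y (n+1) ω - Y n ω) + (Aᶜ.indicator φ) * W := by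
    funext ω
    by_cases h : ω ∈ A
    · have h' : ω ∉ Aᶜ := by simpa using h
      simp [Set.indicator_of_mem h, Set.indicator_of_notMem h']
    · simp [Set.indicator_of_notMem h, Set.indicator_of_mem (Set.mem_compl h), hkey ω]
  have hφind : StronglyMeasurable[ℱ n] (Aᶜ.indicator φ) := hφm.indicator hAm.compl
  have hint1 : Integrable (A.indicator fun ω => Y (n+1) ω - Y n ω) μ :=
    hΔint.indicator (ℱ.le n _ hAm)
  have hφbd : ∀ ω, |(Aᶜ.indicator φ) ω| ≤ 1 := by
    intro ω
    by_cases h : ω ∈ Aᶜ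
    · rw [Set.indicator_of_mem h]
      show |α ^ X n ω| ≤ 1
      rw [abs_of_nonneg (pow_nonneg hα0.le _)]
      exact pow_le_one₀ hα0.le hα1.le
    · rw [Set.indicator_of_notMem h]; simp
  have hint2 : Integrable ((Aᶜ.indicator φ) * W) μ := by
    apply cov_int_of_bound (1/(1-α))
      (((hφind.mono (ℱ.le n)).mul hWm).aestronglyMeasurable)
    filter_upwards [haux] with ω h
    show |(Aᶜ.indicator φ) ω * W ω| ≤ 1/(1-α)
    rw [abs_mul]
    calc |(Aᶜ.indicator φ) ω| * |W ω| ≤ 1 * (1/(1-α)) :=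
          mul_le_mul (hφbd ω) h.2 (abs_nonneg _) one_pos.le
      _ = 1/(1-α) := one_mul _
  have hce : μ[fun ω => Y (n+1) ω - Y n ω | ℱ n]
      =ᵐ[μ] μ[A.indicator (fun ω => Y (n+1) ω - Y n ω)|ℱ n]
        + μ[(Aᶜ.indicator φ) * W|ℱ n] := by
    have hca := condExp_add hint1 hint2 (m := ℱ n)
    rw [← hdecomp] at hca
    exact hca
  have h1 : (0:Ω → ℝ) ≤ᵐ[μ] μ[A.indicator (fun ω => Y (n+1) ω - Y n ω)|ℱ n] := by
    apply condExp_nonneg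
    apply Filter.Eventually.of_forall
    intro ω
    apply Set.indicator_nonneg
    intro ω' hω'
    have h0 : X n ω' = 0 := hω'
    have hY0 : Y n ω' = 0 := by rw [hY]; simp [h0]
    have hY1 : 0 ≤ Y (n+1) ω' := by
      rw [hY]
      apply div_nonneg ?_ hε.le
      nlinarith [pow_le_one₀ hα0.le hα1.le (n := X (n+1) ω')]
    linarith
  have h2 : μ[(Aᶜ.indicator φ) * W|ℱ n] =ᵐ[μ] (Aᶜ.indicator φ) * μ[W|ℱ n] :=
    condExp_mul_of_stronglyMeasurable_left hφind hint2 hWint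
  have h3 : μ[fun ω' => D ω' - c|ℱ n] ≤ᵐ[μ] μ[W|ℱ n] :=
    condExp_mono (hDint.sub (integrable_const c)) hWint
      (haux.mono fun ω h => h.1)
  have h4 : μ[fun ω' => D ω' - c|ℱ n] =ᵐ[μ] fun ω => (μ[D|ℱ n]) ω - c := by
    have h5 : μ[D - (fun _ => c)|ℱ n] =ᵐ[μ] μ[D|ℱ n] - μ[fun _ : Ω => c|ℱ n] :=
      condExp_sub hDint (integrable_const c) _
    have h6 : μ[fun _ : Ω => c|ℱ n] = fun _ => c := condExp_const (ℱ.le n) c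
    filter_upwards [h5] with ω hω
    have : (fun ω' => D ω' - c) = D - (fun _ => c) := rfl
    rw [this, hω, h6]
    simp
  have hfinal : (0:Ω → ℝ) ≤ᵐ[μ] μ[fun ω => Y (n+1) ω - Y n ω|ℱ n] := by
    filter_upwards [hce, h1, h2, h3, h4, hdriftn] with ω hceω h1ω h2ω h3ω h4ω hdω
    rw [Pi.zero_apply]
    rw [hceω, Pi.add_apply]
    rw [h2ω, Pi.mul_apply]
    by_cases hmem : ω ∈ A
    · have hz : (Aᶜ.indicator φ) ω = 0 := Set.indicator_of_notMem (by simpa using hmem) _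
      rw [hz, zero_mul, add_zero]
      exact h1ω
    · have hpos : 0 < X n ω := Nat.pos_of_ne_zero (by simpa [hA] using hmem)
      have hρω : ρ ≤ (μ[D|ℱ n]) ω := hdω hpos
      have hWω : 0 ≤ (μ[W|ℱ n]) ω := by
        rw [h4ω] at h3ω
        have : c ≤ ρ := hρε
        linarith
      have hφnn : 0 ≤ (Aᶜ.indicator φ) ω :=
        Set.indicator_nonneg (fun ω' _ => pow_nonneg hα0.le _) ω
      have := mul_nonneg hφnn hWω
      have h1ω' := h1ω
      simp only [Pi.zero_apply] at h1ω'
      linarith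
  have heqsum : Y (n+1) = Y n + fun ω => Y (n+1) ω - Y n ω := by
    funext ω; simp
  have hYsum : μ[Y (n+1)|ℱ n]
      =ᵐ[μ] Y n + μ[fun ω => Y (n+1) ω - Y n ω|ℱ n] := by
    calc μ[Y (n+1)|ℱ n] = μ[Y n + fun ω => Y (n+1) ω - Y n ω|ℱ n] := by rw [← heqsum]
      _ =ᵐ[μ] μ[Y n|ℱ n] + μ[fun ω => Y (n+1) ω - Y n ω|ℱ n] := condExp_add (hYint n) hΔint _
      _ = Y n + μ[fun ω => Y (n+1) ω - Y n ω|ℱ n] := by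
          rw [condExp_of_stronglyMeasurable (ℱ.le n) (hadY n).stronglyMeasurable (hYint n)]
  filter_upwards [hYsum, hfinal] with ω h h0
  rw [h, Pi.add_apply]
  simp only [Pi.zero_apply] at h0
  linarith
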